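/- Let A, B ∈ M_n(ℂ) and suppose A has rank one. Then A and B are mutually strongly Birkhoff–James orthogonal if and only if A*B = 0 (where A* is the conjugate transpose of A). -/

import Mathlib

open Matrix
open scoped Matrix.Norms.L2Operator

/-- `a` is strongly Birkhoff–James orthogonal to `b`. -/
def StrongBJ {𝔄 : Type*} [NormedRing 𝔄] (a b : 𝔄) : Prop :=
  ∀ c : 𝔄, ‖a‖ ≤ ‖a + b * c‖

/-- `a` and `b` are mutually strongly Birkhoff–James orthogonal. -/
def MutualBJ {𝔄 : Type*} [NormedRing 𝔄] (a b : 𝔄) : Prop :=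
  StrongBJ a b ∧ StrongBJ b a

open scoped Matrix.Norms.L2Operator ComplexConjugate

noncomputable section
namespace Stmt15Aux

variable {n : ℕ}

abbrev e (x : Fin n → ℂ) : EuclideanSpace ℂ (Fin n) := (WithLp.equiv 2 (Fin n → ℂ)).symm x

lemma inner_e (a b : Fin n → ℂ) : @inner ℂ _ _ (e a) (e b) = star a ⬝ᵥ b := by
  simp [PiLp.inner_apply, RCLike.inner_apply, dotProduct]
  exact Finset.sum_congr rfl fun _ _ => mul_comm _ _

lemma opNorm_le_of (M : Matrix (Fin n) (Fin n) ℂ) (K : ℝ) (hK : 0 ≤ K)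
    (h : ∀ x : Fin n → ℂ, ‖e (M *ᵥ x)‖ ≤ K * ‖e x‖) : ‖M‖ ≤ K := by
  rw [Matrix.l2_opNorm_def]
  refine ContinuousLinearMap.opNorm_le_bound _ hK fun x => ?_
  simpa [e, Matrix.toEuclideanLin_apply] using h x.ofLp

lemma mulVec_le (M : Matrix (Fin n) (Fin n) ℂ) (x : Fin n → ℂ) :
    ‖e (M *ᵥ x)‖ ≤ ‖M‖ * ‖e x‖ :=
  Matrix.l2_opNorm_mulVec M (e x)

end Stmt15Aux

namespace Stmt15Aux

lemma strongBJ_of {n : ℕ} (X Y : Matrix (Fin n) (Fin n) ℂ) (h : Xᴴ * Y = 0) (c : Matrix (Fin n) (Fin n) ℂ) :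
    ‖X‖ ≤ ‖X + Y * c‖ := by
  refine opNorm_le_of _ _ (norm_nonneg _) fun x => ?_
  refine le_trans ?_ (mulVec_le _ x)
  have horth : @inner ℂ _ _ (e (X *ᵥ x)) (e ((Y * c) *ᵥ x)) = 0 := by
    rw [inner_e, star_mulVec, dotProduct_mulVec, vecMul_vecMul, ← Matrix.mul_assoc, h,
      Matrix.zero_mul, Matrix.vecMul_zero, zero_dotProduct]
  have hadd : e ((X + Y * c) *ᵥ x) = e (X *ᵥ x) + e ((Y * c) *ᵥ x) := by
    simp [Matrix.add_mulVec]
    rfl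
  have hsq := norm_add_sq (𝕜 := ℂ) (e (X *ᵥ x)) (e ((Y * c) *ᵥ x))
  rw [horth] at hsq
  have h1 : ‖e (X *ᵥ x)‖ ^ 2 ≤ ‖e ((X + Y * c) *ᵥ x)‖ ^ 2 := by
    rw [hadd, hsq]; simp only [map_zero]; nlinarith [sq_nonneg ‖e ((Y * c) *ᵥ x)‖]
  nlinarith [norm_nonneg (e (X *ᵥ x)), norm_nonneg (e ((X + Y * c) *ᵥ x))]

end Stmt15Aux

namespace Stmt15Aux

lemma rank_one_decomp {n : ℕ} (A : Matrix (Fin n) (Fin n) ℂ) (hA : A.rank = 1) :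
    ∃ u w : Fin n → ℂ, u ≠ 0 ∧ w ≠ 0 ∧ ∀ i j, A i j = u i * w j := by
  have hr := hA
  rw [Matrix.rank] at hr
  obtain ⟨v, hv0, hv⟩ := finrank_eq_one_iff'.mp hr
  choose c hc using fun j => hv ⟨A *ᵥ Pi.single j 1, ⟨Pi.single j 1, rfl⟩⟩
  have hcc : ∀ i j, c j * (v : Fin n → ℂ) i = A i j := by
    intro i j
    have h1 : ((c j • v : LinearMap.range A.mulVecLin) : Fin n → ℂ) i
        = ((⟨A *ᵥ Pi.single j 1, ⟨Pi.single j 1, rfl⟩⟩ :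
            LinearMap.range A.mulVecLin) : Fin n → ℂ) i := by rw [hc j]
    simpa using h1
  refine ⟨(v : Fin n → ℂ), c, ?_, ?_, ?_⟩
  · simpa using hv0
  · intro hc0
    have hA0 : A = 0 := by
      ext i j
      rw [← hcc i j, hc0]
      simp
    rw [hA0] at hA
    simp at hA
  · intro i j
    rw [← hcc i j]; ring

end Stmt15Aux

namespace Stmt15Aux

variable {n : ℕ}

lemma e_star_norm (b : Fin n → ℂ) : ‖e (star b)‖ = ‖e b‖ := by
  simp [EuclideanSpace.norm_eq]

lemma norm_e_sq (b : Fin n → ℂ) : ‖e b‖ ^ 2 = ∑ i, ‖b i‖ ^ 2 := by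
  rw [EuclideanSpace.norm_eq, Real.sq_sqrt (by positivity)]
  rfl

lemma rank_one_mulVec (a b x : Fin n → ℂ) :
    (Matrix.of fun i j => a i * b j : Matrix (Fin n) (Fin n) ℂ) *ᵥ x = (b ⬝ᵥ x) • a := by
  ext i
  simp only [Matrix.mulVec, dotProduct, Matrix.of_apply, Pi.smul_apply, smul_eq_mul,
    Finset.sum_mul]
  exact Finset.sum_congr rfl fun j _ => by ring

lemma dot_norm_le (b x : Fin n → ℂ) : ‖b ⬝ᵥ x‖ ≤ ‖e b‖ * ‖e x‖ := by
  have h := norm_inner_le_norm (𝕜 := ℂ) (e (star b)) (e x)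
  rw [inner_e, star_star, e_star_norm] at h
  exact h

lemma rank_one_norm_le (a b : Fin n → ℂ) :
    ‖(Matrix.of fun i j => a i * b j : Matrix (Fin n) (Fin n) ℂ)‖ ≤ ‖e a‖ * ‖e b‖ := by
  refine opNorm_le_of _ _ (by positivity) fun x => ?_
  rw [rank_one_mulVec]
  have : ‖e ((b ⬝ᵥ x) • a)‖ = ‖b ⬝ᵥ x‖ * ‖e a‖ := by
    have : e ((b ⬝ᵥ x) • a) = (b ⬝ᵥ x) • e a := rfl
    rw [this, norm_smul]
  rw [this]
  calc ‖b ⬝ᵥ x‖ * ‖e a‖ ≤ (‖e b‖ * ‖e x‖) * ‖e a‖ := by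
        exact mul_le_mul_of_nonneg_right (dot_norm_le b x) (norm_nonneg _)
    _ = ‖e a‖ * ‖e b‖ * ‖e x‖ := by ring

lemma rank_one_norm_ge (a b : Fin n → ℂ) :
    ‖e a‖ * ‖e b‖ ≤ ‖(Matrix.of fun i j => a i * b j : Matrix (Fin n) (Fin n) ℂ)‖ := by
  by_cases hb : b = 0
  · simp [hb]
    rw [show e (0 : Fin n → ℂ) = 0 from rfl]; simp
  · have hnb : 0 < ‖e b‖ := by
      rw [norm_pos_iff]
      simpa [e] using hb
    have hbb : b ⬝ᵥ star b = ((‖e b‖ ^ 2 : ℝ) : ℂ) := by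
      rw [norm_e_sq]
      push_cast
      simp [dotProduct, Complex.mul_conj', mul_comm, Complex.sq_norm, Complex.normSq_eq_norm_sq]
    have h := mulVec_le (Matrix.of fun i j => a i * b j : Matrix (Fin n) (Fin n) ℂ) (star b)
    rw [rank_one_mulVec, hbb] at h
    have h2 : ‖e (((‖e b‖ ^ 2 : ℝ) : ℂ) • a)‖ = ‖e b‖ ^ 2 * ‖e a‖ := by
      have : e (((‖e b‖ ^ 2 : ℝ) : ℂ) • a) = ((‖e b‖ ^ 2 : ℝ) : ℂ) • e a := rfl
      rw [this, norm_smul]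
      simp [abs_of_nonneg (sq_nonneg ‖e b‖)]
    rw [h2, e_star_norm] at h
    nlinarith [norm_nonneg (e a)]

end Stmt15Aux


open Stmt15Aux in
theorem stmt15 {n : ℕ} (A B : Matrix (Fin n) (Fin n) ℂ) (hA : A.rank = 1) :
    MutualBJ A B ↔ Aᴴ * B = 0 := by
  obtain ⟨u, w, hu, hw, hAuw⟩ := rank_one_decomp A hA
  constructor
  · rintro ⟨h1, -⟩
    set z : Fin n → ℂ := Bᴴ *ᵥ u with hzdef
    have hz2 : ∀ j, ∑ k, conj (u k) * B k j = conj (z j) := by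
      intro j
      simp [hzdef, Matrix.mulVec, dotProduct, Matrix.conjTranspose_apply, map_sum, mul_comm]
    have hABij : ∀ i j, (Aᴴ * B) i j = conj (w i) * conj (z j) := by
      intro i j
      rw [← hz2 j, Finset.mul_sum]
      simp only [Matrix.mul_apply, Matrix.conjTranspose_apply, hAuw]
      exact Finset.sum_congr rfl fun k _ => by simp [_root_.map_mul]; ring
    by_cases hz0 : z = 0
    · ext i j
      rw [hABij i j, congrFun hz0 j]
      simp
    · exfalso
      set p : Fin n → ℂ := B *ᵥ z with hpdef
      set s : ℝ := ∑ j, ‖z j‖ ^ 2 with hsdef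
      have hs : 0 < s := by
        obtain ⟨j0, hj0⟩ : ∃ j, z j ≠ 0 := by
          by_contra h; push_neg at h; exact hz0 (funext h)
        have hp1 : (0:ℝ) < ‖z j0‖ ^ 2 := pow_pos (norm_pos_iff.mpr hj0) 2
        have hp2 : ‖z j0‖ ^ 2 ≤ ∑ j, ‖z j‖ ^ 2 :=
          Finset.single_le_sum (fun (i : Fin n) _ => sq_nonneg ‖z i‖) (Finset.mem_univ j0)
        rw [hsdef]; linarith
      have hip : @inner ℂ _ _ (e u) (e p) = (s : ℂ) := by
        rw [inner_e]
        have hh1 : star u ⬝ᵥ p = ∑ k, ∑ j, conj (u k) * B k j * z j := by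
          simp only [dotProduct, hpdef, Matrix.mulVec, dotProduct, Pi.star_apply,
            Finset.mul_sum]
          exact Finset.sum_congr rfl fun k _ => Finset.sum_congr rfl fun j _ => by
            simp [mul_assoc, Complex.star_def]
        rw [hh1, Finset.sum_comm]
        have hh2 : ∀ j, ∑ k, conj (u k) * B k j * z j = conj (z j) * z j := by
          intro j; rw [← Finset.sum_mul, hz2]
        rw [Finset.sum_congr rfl fun j _ => hh2 j, hsdef]
        push_cast
        exact Finset.sum_congr rfl fun j _ => by
          rw [mul_comm, Complex.mul_conj']
      have hp0 : e p ≠ 0 := by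
        intro h
        rw [h, inner_zero_right] at hip
        exact hs.ne' (by exact_mod_cast hip.symm)
      set np : ℝ := ‖e p‖ with hnpdef
      have hnp : 0 < np := norm_pos_iff.mpr hp0
      set t : ℝ := -(s / np ^ 2) with htdef
      set q : Fin n → ℂ := u + (t : ℂ) • p with hqdef
      have hqe : e q = e u + (t : ℂ) • e p := rfl
      have hq2 : ‖e q‖ ^ 2 = ‖e u‖ ^ 2 + 2 * (t * s) + t ^ 2 * np ^ 2 := by
        rw [hqe, norm_add_sq (𝕜 := ℂ), inner_smul_right, hip, norm_smul]
        simp only [← Complex.ofReal_mul, Complex.ofReal_re, Complex.norm_real,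
          RCLike.re_to_complex]
        rw [Real.norm_eq_abs, mul_pow, sq_abs]
      have hlt : ‖e q‖ ^ 2 < ‖e u‖ ^ 2 := by
        have ht : t * np ^ 2 = -s := by
          rw [htdef, neg_mul, div_mul_cancel₀ _ (by positivity)]
        have htneg : t < 0 := by
          rw [htdef]
          have : 0 < s / np ^ 2 := by positivity
          linarith
        nlinarith
      have hnq : ‖e q‖ < ‖e u‖ := by
        nlinarith [norm_nonneg (e q), norm_nonneg (e u)]
      set C : Matrix (Fin n) (Fin n) ℂ := Matrix.of fun i j => (t : ℂ) * z i * w j with hCdef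
      have hABC : A + B * C = Matrix.of fun i j => q i * w j := by
        ext i j
        have hpi : p i = ∑ k, B i k * z k := rfl
        simp only [Matrix.add_apply, Matrix.mul_apply, Matrix.of_apply, hAuw, hCdef, hqdef,
          Pi.add_apply, Pi.smul_apply, smul_eq_mul, hpi, Finset.mul_sum, Finset.sum_mul,
          add_mul]
        congr 1
        exact Finset.sum_congr rfl fun k _ => by ring
      have hnorm1 : ‖A + B * C‖ ≤ ‖e q‖ * ‖e w‖ := by
        rw [hABC]; exact rank_one_norm_le q w
      have hA' : A = Matrix.of fun i j => u i * w j := by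
        ext i j; exact hAuw i j
      have hnorm2 : ‖e u‖ * ‖e w‖ ≤ ‖A‖ := by
        rw [hA']; exact rank_one_norm_ge u w
      have hnw : 0 < ‖e w‖ := by
        refine norm_pos_iff.mpr ?_
        simpa [e] using hw
      have hlast := h1 C
      have : ‖e q‖ * ‖e w‖ < ‖e u‖ * ‖e w‖ := mul_lt_mul_of_pos_right hnq hnw
      linarith
  · intro hAB
    have hBA : Bᴴ * A = 0 := by
      have h := congrArg Matrix.conjTranspose hAB
      simpa [Matrix.conjTranspose_mul] using h
    exact ⟨strongBJ_of A B hAB, strongBJ_of B A hBA⟩
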